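/- Let X_1,...,X_n be indicator (0/1-valued) random variables such that for every subset S ⊆ {1,...,n}, Pr[∧_{i∈S} X_i = 1] ≤ ∏_{i∈S} Pr[X_i = 1]. Then for every real λ ≥ 0, E[∏_{i=1}^n e^{λ X_i}] ≤ ∏_{i=1}^n E[e^{λ X_i}]. -/

import Mathlib

open MeasureTheory

/-- If indicator random variables `X₁,…,Xₙ` satisfy the subset negative-correlation
property, then for every `λ ≥ 0`,
`E[∏ i, e^{λ Xᵢ}] ≤ ∏ i, E[e^{λ Xᵢ}]`. -/
theorem mgf_domination {Ω : Type*} [MeasurableSpace Ω] (μ : Measure Ω)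
    [IsProbabilityMeasure μ] (n : ℕ) (X : Fin n → Ω → ℝ)
    (hmeas : ∀ i, Measurable (X i))
    (hind : ∀ i ω, X i ω = 0 ∨ X i ω = 1)
    (hneg : ∀ S : Finset (Fin n),
      μ {ω | ∀ i ∈ S, X i ω = 1} ≤ ∏ i ∈ S, μ {ω | X i ω = 1})
    (l : ℝ) (hl : 0 ≤ l) :
    ∫ ω, ∏ i, Real.exp (l * X i ω) ∂μ ≤ ∏ i, ∫ ω, Real.exp (l * X i ω) ∂μ := by
  set c := Real.exp l - 1 with hc
  have hc0 : 0 ≤ c := by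
    have := Real.one_le_exp hl
    simp [hc]; linarith
  set s : Finset (Fin n) → Set Ω := fun t => {ω | ∀ i ∈ t, X i ω = 1} with hs
  have hSmeas : ∀ t : Finset (Fin n), MeasurableSet (s t) := by
    intro t
    have : s t = ⋂ i ∈ t, X i ⁻¹' {1} := by
      ext ω; simp [hs, Set.mem_iInter]
    rw [this]
    exact MeasurableSet.biInter t.countable_toSet
      fun i _ => (hmeas i) (measurableSet_singleton 1)
  have hexp : ∀ i ω, Real.exp (l * X i ω) = c * X i ω + 1 := by
    intro i ω; rcases hind i ω with h | h <;> simp [h, hc]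
  have hprodind : ∀ (t : Finset (Fin n)) (ω : Ω),
      (∏ i ∈ t, X i ω) = Set.indicator (s t) (fun _ => (1:ℝ)) ω := by
    intro t ω
    by_cases h : ω ∈ s t
    · rw [Set.indicator_of_mem h]
      exact Finset.prod_eq_one fun i hi => h i hi
    · rw [Set.indicator_of_notMem h]
      simp only [hs, Set.mem_setOf_eq, not_forall] at h
      obtain ⟨i, hi, hne⟩ := h
      exact Finset.prod_eq_zero hi ((hind i ω).resolve_right hne)
  have hintind : ∀ t : Finset (Fin n),
      Integrable (Set.indicator (s t) (fun _ => (1:ℝ))) μ :=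
    fun t => (integrable_const (1:ℝ)).indicator (hSmeas t)
  have hval : ∀ t : Finset (Fin n),
      ∫ ω, Set.indicator (s t) (fun _ => (1:ℝ)) ω ∂μ = (μ (s t)).toReal := by
    intro t
    rw [integral_indicator (hSmeas t)]
    simp [Measure.real]
  -- LHS computation
  have hLHS : ∫ ω, ∏ i, Real.exp (l * X i ω) ∂μ
      = ∑ t ∈ (Finset.univ : Finset (Fin n)).powerset, c ^ t.card * (μ (s t)).toReal := by
    have e1 : ∀ ω, (∏ i, Real.exp (l * X i ω))
        = ∑ t ∈ (Finset.univ : Finset (Fin n)).powerset,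
            c ^ t.card * Set.indicator (s t) (fun _ => (1:ℝ)) ω := by
      intro ω
      calc (∏ i, Real.exp (l * X i ω)) = ∏ i, (c * X i ω + 1) := by
            simp [hexp]
        _ = ∑ t ∈ (Finset.univ : Finset (Fin n)).powerset,
              (∏ i ∈ t, (c * X i ω)) * ∏ i ∈ Finset.univ \ t, (1:ℝ) :=
            Finset.prod_add _ _ _
        _ = _ := by
            refine Finset.sum_congr rfl fun t _ => ?_
            rw [Finset.prod_const_one, mul_one, Finset.prod_mul_distrib,
              Finset.prod_const, hprodind]
    simp only [e1]
    rw [integral_finset_sum]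
    · exact Finset.sum_congr rfl fun t _ => by
        rw [integral_const_mul, hval]
    · exact fun t _ => ((hintind t).const_mul _)
  -- RHS computation
  have hRHSi : ∀ i, ∫ ω, Real.exp (l * X i ω) ∂μ
      = c * (μ (s {i})).toReal + 1 := by
    intro i
    have e2 : ∀ ω, Real.exp (l * X i ω)
        = c * Set.indicator (s {i}) (fun _ => (1:ℝ)) ω + 1 := by
      intro ω
      rw [hexp]
      congr 1
      congr 1
      have := hprodind {i} ω
      simpa using this
    simp only [e2]
    rw [integral_add (((hintind {i}).const_mul c)) (integrable_const 1),
      integral_const_mul, hval, integral_const]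
    simp
  have hRHS : (∏ i, ∫ ω, Real.exp (l * X i ω) ∂μ)
      = ∑ t ∈ (Finset.univ : Finset (Fin n)).powerset,
          c ^ t.card * ∏ i ∈ t, (μ (s {i})).toReal := by
    calc (∏ i, ∫ ω, Real.exp (l * X i ω) ∂μ)
        = ∏ i, (c * (μ (s {i})).toReal + 1) := by
          exact Finset.prod_congr rfl fun i _ => hRHSi i
      _ = ∑ t ∈ (Finset.univ : Finset (Fin n)).powerset,
            (∏ i ∈ t, (c * (μ (s {i})).toReal)) * ∏ i ∈ Finset.univ \ t, (1:ℝ) :=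
          Finset.prod_add _ _ _
      _ = _ := by
          refine Finset.sum_congr rfl fun t _ => ?_
          rw [Finset.prod_const_one, mul_one, Finset.prod_mul_distrib,
            Finset.prod_const]
  rw [hLHS, hRHS]
  refine Finset.sum_le_sum fun t _ => ?_
  refine mul_le_mul_of_nonneg_left ?_ (pow_nonneg hc0 _)
  have hsingle : ∀ i, s {i} = {ω | X i ω = 1} := by
    intro i; ext ω; simp [hs]
  have hne : (∏ i ∈ t, μ {ω | X i ω = 1}) ≠ ⊤ := by
    refine (lt_of_le_of_lt (Finset.prod_le_prod' fun i _ => prob_le_one) ?_).ne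
    simp
  have := ENNReal.toReal_mono hne (hneg t)
  rw [ENNReal.toReal_prod] at this
  calc (μ (s t)).toReal ≤ ∏ i ∈ t, (μ {ω | X i ω = 1}).toReal := this
    _ = ∏ i ∈ t, (μ (s {i})).toReal := by
        exact Finset.prod_congr rfl fun i _ => by rw [hsingle]
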